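/- Let q = sum over l in [N] of q_l * z_l^2 where z_1, ..., z_N are i.i.d. standard normal random variables and the real coefficients satisfy |q_l| ≤ λ_max for all l. Then for every ν with 0 < ν < 1/2, P(q - E[q] ≥ N ν) ≤ exp(- N ν^2 / (8 max{λ_max^2, 1})). -/

import Mathlib

open MeasureTheory ProbabilityTheory

section Aux
open Real
open scoped ENNReal NNReal

lemma aux_H_deriv (u : ℝ) : HasDerivAt (fun u : ℝ => (1 - u) * Real.exp (u + u^2))
    ((u - 2*u^2) * Real.exp (u + u^2)) u := by
  have h1 : HasDerivAt (fun u : ℝ => 1 - u) (-1) u := by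
    simpa using (hasDerivAt_id u).const_sub 1
  have h2 : HasDerivAt (fun u : ℝ => u + u^2) (1 + 2*u) u := by
    have := ((hasDerivAt_pow 2 u)).const_add u
    exact ((hasDerivAt_id' u).add (hasDerivAt_pow 2 u)).congr_deriv (by norm_num)
  have := h1.mul h2.exp
  exact this.congr_deriv (by ring)

lemma aux_H_ge_one {u : ℝ} (h1 : -(1/2) ≤ u) (h2 : u ≤ 1/2) :
    1 ≤ (1 - u) * Real.exp (u + u^2) := by
  set H : ℝ → ℝ := fun u => (1 - u) * Real.exp (u + u^2) with hH
  have hcont : Continuous H := by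
    continuity
  have hdiff : Differentiable ℝ H := fun x => (aux_H_deriv x).differentiableAt
  rcases le_or_gt u 0 with hu | hu
  · have hanti : AntitoneOn H (Set.Icc (-(1/2) : ℝ) 0) := by
      apply antitoneOn_of_deriv_nonpos (convex_Icc _ _) hcont.continuousOn
        (hdiff.differentiableOn)
      intro x hx
      rw [(aux_H_deriv x).deriv]
      rw [interior_Icc] at hx
      have hx1 := hx.1
      have hx2 := hx.2
      have : x - 2*x^2 ≤ 0 := by nlinarith
      exact mul_nonpos_of_nonpos_of_nonneg this (Real.exp_nonneg _)
    have := hanti (Set.mem_Icc.2 ⟨h1, hu⟩) (Set.mem_Icc.2 ⟨by norm_num, le_refl 0⟩) hu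
    simpa [hH] using this
  · have hmono : MonotoneOn H (Set.Icc (0:ℝ) (1/2)) := by
      apply monotoneOn_of_deriv_nonneg (convex_Icc _ _) hcont.continuousOn
        (hdiff.differentiableOn)
      intro x hx
      rw [(aux_H_deriv x).deriv]
      rw [interior_Icc] at hx
      have hx1 := hx.1
      have hx2 := hx.2
      have : 0 ≤ x - 2*x^2 := by nlinarith
      exact mul_nonneg this (Real.exp_nonneg _)
    have := hmono (Set.mem_Icc.2 ⟨le_refl 0, by norm_num⟩) (Set.mem_Icc.2 ⟨hu.le, h2⟩) hu.le
    simpa [hH] using this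

lemma aux_key {s : ℝ} (hs : |s| ≤ 1/4) :
    Real.exp (-s) * (Real.sqrt (1 - 2*s))⁻¹ ≤ Real.exp (2 * s^2) := by
  have hs1 : -(1/4) ≤ s := neg_le_of_abs_le hs
  have hs2 : s ≤ 1/4 := le_of_abs_le hs
  have h12 : (1:ℝ)/2 ≤ 1 - 2*s := by linarith
  have hpos : 0 < 1 - 2*s := by linarith
  have hH := aux_H_ge_one (u := 2*s) (by linarith) (by linarith)
  -- exp(-(2s+4s²)) ≤ 1-2s
  have hkey : Real.exp (-(2*s + 4*s^2)) ≤ 1 - 2*s := by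
    have hexp : (0:ℝ) < Real.exp (2*s + (2*s)^2) := Real.exp_pos _
    have : 1 / Real.exp (2*s + (2*s)^2) ≤ 1 - 2*s := by
      rw [div_le_iff₀ hexp]
      linarith [hH]
    calc Real.exp (-(2*s + 4*s^2)) = 1 / Real.exp (2*s + (2*s)^2) := by
          rw [Real.exp_neg]; ring_nf
      _ ≤ 1 - 2*s := this
  -- sqrt: exp(-(s+2s²)) ≤ sqrt(1-2s)
  have hsqrt : Real.exp (-(s + 2*s^2)) ≤ Real.sqrt (1 - 2*s) := by
    have h2' : Real.exp (-(s + 2*s^2)) ^ 2 ≤ 1 - 2*s := by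
      calc Real.exp (-(s + 2*s^2)) ^ 2 = Real.exp (-(2*s + 4*s^2)) := by
            rw [← Real.exp_nat_mul]; ring_nf
        _ ≤ 1 - 2*s := hkey
    calc Real.exp (-(s + 2*s^2)) = Real.sqrt (Real.exp (-(s + 2*s^2)) ^ 2) :=
          (Real.sqrt_sq (Real.exp_nonneg _)).symm
      _ ≤ Real.sqrt (1 - 2*s) := Real.sqrt_le_sqrt h2'
  have hsq_pos : 0 < Real.sqrt (1 - 2*s) := Real.sqrt_pos.2 hpos
  have hinv : (Real.sqrt (1 - 2*s))⁻¹ ≤ Real.exp (s + 2*s^2) := by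
    rw [inv_le_comm₀ hsq_pos (Real.exp_pos _)]
    rw [← Real.exp_neg]
    exact hsqrt
  calc Real.exp (-s) * (Real.sqrt (1 - 2*s))⁻¹
      ≤ Real.exp (-s) * Real.exp (s + 2*s^2) := by
        exact mul_le_mul_of_nonneg_left hinv (Real.exp_nonneg _)
    _ = Real.exp (2 * s^2) := by rw [← Real.exp_add]; ring_nf


lemma aux_gauss_pdf_eq (x : ℝ) : gaussianPDFReal 0 1 x = (Real.sqrt (2 * π))⁻¹ * Real.exp (-(x^2)/2) := by
  simp [gaussianPDFReal]

lemma aux_gauss_smul (s : ℝ) (g : ℝ → ℝ) :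
    ∫ x, g x ∂(gaussianReal 0 1) = ∫ x, gaussianPDFReal 0 1 x * g x := by
  rw [gaussianReal_of_var_ne_zero _ one_ne_zero]
  have hmeas : Measurable (fun x => (gaussianPDFReal 0 1 x).toNNReal) :=
    (measurable_gaussianPDFReal 0 1).real_toNNReal
  have h0 : gaussianPDF 0 1 = (fun x => ((fun x => (gaussianPDFReal 0 1 x).toNNReal) x : ℝ≥0∞)) := by
    ext x
    simp [gaussianPDF, ENNReal.ofReal]
  rw [h0, integral_withDensity_eq_integral_smul hmeas]
  congr 1
  ext x
  simp [NNReal.smul_def, Real.coe_toNNReal _ (gaussianPDFReal_nonneg 0 1 x)]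

lemma aux_gauss_integrable {s : ℝ} (hs : s < 1/2) :
    Integrable (fun x => Real.exp (s * x^2)) (gaussianReal 0 1) := by
  rw [gaussianReal_of_var_ne_zero _ one_ne_zero]
  have hmeas : Measurable (fun x => (gaussianPDFReal 0 1 x).toNNReal) :=
    (measurable_gaussianPDFReal 0 1).real_toNNReal
  have h0 : gaussianPDF 0 1 = (fun x => ((fun x => (gaussianPDFReal 0 1 x).toNNReal) x : ℝ≥0∞)) := by
    ext x
    simp [gaussianPDF, ENNReal.ofReal]
  rw [h0, integrable_withDensity_iff_integrable_smul hmeas]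
  have : (fun x => (gaussianPDFReal 0 1 x).toNNReal • Real.exp (s * x^2))
      = fun x => (Real.sqrt (2 * π))⁻¹ * Real.exp (-(1/2 - s) * x^2) := by
    ext x
    rw [NNReal.smul_def, Real.coe_toNNReal _ (gaussianPDFReal_nonneg 0 1 x), aux_gauss_pdf_eq]
    rw [smul_eq_mul, mul_assoc, ← Real.exp_add]
    ring_nf
  rw [this]
  exact (integrable_exp_neg_mul_sq (by linarith)).const_mul _

lemma aux_gauss_integral {s : ℝ} (hs : s < 1/2) :
    ∫ x, Real.exp (s * x^2) ∂(gaussianReal 0 1) = (Real.sqrt (1 - 2*s))⁻¹ := by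
  rw [aux_gauss_smul s]
  have h1 : (fun x => gaussianPDFReal 0 1 x * Real.exp (s * x^2))
      = fun x => (Real.sqrt (2 * π))⁻¹ * Real.exp (-(1/2 - s) * x^2) := by
    ext x
    rw [aux_gauss_pdf_eq, mul_assoc, ← Real.exp_add]
    ring_nf
  rw [h1, integral_const_mul, integral_gaussian]
  have hb : (0:ℝ) < 1/2 - s := by linarith
  rw [show (Real.sqrt (2 * π))⁻¹ = Real.sqrt ((2 * π)⁻¹) by rw [Real.sqrt_inv]]
  rw [← Real.sqrt_mul (by positivity)]
  have hne : (1:ℝ) - 2*s ≠ 0 := by linarith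
  have hne2 : (1:ℝ)/2 - s ≠ 0 := by linarith
  rw [show (2 * π)⁻¹ * (π / (1/2 - s)) = (1 - 2*s)⁻¹ by
    field_simp]
  rw [Real.sqrt_inv]

end Aux

section Main
open Real
open scoped ENNReal NNReal

/-- Large deviation bound for a diagonal Gaussian quadratic form
`q = ∑ l, q_l z_l²` with i.i.d. standard normal `z_l` and `|q_l| ≤ λmax`:
for `0 < ν < 1/2`, `P(q - E q ≥ N ν) ≤ exp(-N ν² / (8 max{λmax², 1}))`. -/
theorem stmt_2 {Ω : Type*} [MeasurableSpace Ω] (P : Measure Ω) [IsProbabilityMeasure P]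
    (N : ℕ) (z : Fin N → Ω → ℝ) (hmeas : ∀ l, Measurable (z l))
    (hindep : iIndepFun z P)
    (hgauss : ∀ l, Measure.map (z l) P = gaussianReal 0 1)
    (ql : Fin N → ℝ) (lammax : ℝ) (hql : ∀ l, |ql l| ≤ lammax)
    (ν : ℝ) (hν0 : 0 < ν) (hν : ν < 1/2) :
    P {ω | (∑ l, ql l * (z l ω) ^ 2) - (∑ l, ql l) ≥ (N : ℝ) * ν}
      ≤ ENNReal.ofReal (Real.exp (-((N : ℝ) * ν ^ 2) / (8 * max (lammax ^ 2) 1))) := by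
  rcases Nat.eq_zero_or_pos N with hN | hN
  · subst hN
    simp only [Finset.univ_eq_empty, Finset.sum_empty, Nat.cast_zero, zero_mul, sub_zero,
      ge_iff_le, le_refl, Set.setOf_true, neg_zero, zero_div, Real.exp_zero,
      ENNReal.ofReal_one, measure_univ, le_refl]
  -- setup
  have hlam0 : 0 ≤ lammax := le_trans (abs_nonneg _) (hql ⟨0, hN⟩)
  set M : ℝ := max (lammax ^ 2) 1 with hMdef
  have hM1 : (1:ℝ) ≤ M := le_max_right _ _
  have hMlam : lammax ^ 2 ≤ M := le_max_left _ _
  have hM0 : (0:ℝ) < M := lt_of_lt_of_le one_pos hM1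
  set t : ℝ := ν / (4 * M) with htdef
  have ht0 : 0 < t := div_pos hν0 (by linarith)
  have hlamM : lammax ≤ M := by
    rcases le_or_gt lammax 1 with h | h
    · linarith
    · nlinarith
  have hts : ∀ l, |t * ql l| ≤ 1/4 := by
    intro l
    rw [abs_mul, abs_of_pos ht0]
    have h1 : t * |ql l| ≤ t * lammax := mul_le_mul_of_nonneg_left (hql l) ht0.le
    have h2 : t * lammax = ν * lammax / (4 * M) := by rw [htdef]; ring
    have h3 : ν * lammax ≤ M := by nlinarith
    have h4 : ν * lammax / (4 * M) ≤ M / (4 * M) := by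
      apply div_le_div_of_nonneg_right h3 (by linarith) |>.trans_eq rfl
    have h5 : M / (4 * M) = 1/4 := by field_simp
    linarith
  -- the centered summands
  set X : Fin N → Ω → ℝ := fun l ω => ql l * (z l ω) ^ 2 - ql l with hXdef
  have hXmeas : ∀ l, Measurable (X l) := fun l =>
    (((hmeas l).pow_const 2).const_mul (ql l)).sub_const (ql l)
  have hXindep : iIndepFun X P := by
    have := hindep.comp (fun l (x : ℝ) => ql l * x ^ 2 - ql l)
      (fun l => ((measurable_id.pow_const 2).const_mul (ql l)).sub_const (ql l))
    exact this
  -- integrability of exp(t * X l)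
  have hint : ∀ l ∈ Finset.univ, Integrable (fun ω => Real.exp (t * X l ω)) P := by
    intro l _
    have hs : t * ql l < 1/2 := lt_of_le_of_lt (le_of_abs_le (hts l)) (by norm_num)
    have hg : Integrable (fun x : ℝ => Real.exp (t * (ql l * x ^ 2 - ql l))) (gaussianReal 0 1) := by
      have : (fun x : ℝ => Real.exp (t * (ql l * x ^ 2 - ql l)))
          = fun x => Real.exp (-(t * ql l)) * Real.exp ((t * ql l) * x ^ 2) := by
        ext x; rw [← Real.exp_add]; ring_nf
      rw [this]
      exact (aux_gauss_integrable hs).const_mul _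
    have hg' : Integrable (fun x : ℝ => Real.exp (t * (ql l * x ^ 2 - ql l)))
        (Measure.map (z l) P) := by rwa [hgauss l]
    exact (integrable_map_measure hg'.1 (hmeas l).aemeasurable).1 hg'
  -- mgf bound for each summand
  have hmgf : ∀ l, mgf (X l) P t ≤ Real.exp (2 * (t * ql l) ^ 2) := by
    intro l
    have hs : t * ql l < 1/2 := lt_of_le_of_lt (le_of_abs_le (hts l)) (by norm_num)
    have hcomp : mgf (X l) P t
        = ∫ x, Real.exp (t * (ql l * x ^ 2 - ql l)) ∂(gaussianReal 0 1) := by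
      have hAE : AEStronglyMeasurable (fun x : ℝ => Real.exp (t * (ql l * x ^ 2 - ql l)))
          (Measure.map (z l) P) := Measurable.aestronglyMeasurable (by measurability)
      rw [mgf, ← hgauss l, integral_map (hmeas l).aemeasurable hAE]
    have heq : (fun x : ℝ => Real.exp (t * (ql l * x ^ 2 - ql l)))
        = fun x => Real.exp (-(t * ql l)) * Real.exp ((t * ql l) * x ^ 2) := by
      ext x; rw [← Real.exp_add]; ring_nf
    rw [hcomp, heq, integral_const_mul, aux_gauss_integral hs]
    exact aux_key (hts l)
  -- Chernoff
  have hint_sum := hXindep.integrable_exp_mul_sum hXmeas hint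
  have hchern := measure_ge_le_exp_mul_mgf (X := ∑ l, X l) (μ := P) ((N:ℝ) * ν) ht0.le hint_sum
  have hmgfsum : mgf (∑ l, X l) P t = ∏ l, mgf (X l) P t := hXindep.mgf_sum hXmeas Finset.univ
  have hprod : ∏ l, mgf (X l) P t ≤ Real.exp ((N:ℝ) * (2 * t^2 * M)) := by
    calc ∏ l, mgf (X l) P t ≤ ∏ l : Fin N, Real.exp (2 * (t * ql l) ^ 2) :=
          Finset.prod_le_prod (fun l _ => mgf_nonneg) (fun l _ => hmgf l)
      _ = Real.exp (∑ l, 2 * (t * ql l) ^ 2) := by rw [Real.exp_sum]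
      _ ≤ Real.exp ((N:ℝ) * (2 * t^2 * M)) := by
          apply Real.exp_le_exp.2
          calc ∑ l, 2 * (t * ql l) ^ 2 ≤ ∑ l : Fin N, 2 * t^2 * M := by
                apply Finset.sum_le_sum
                intro l _
                have h1 : (ql l) ^ 2 ≤ lammax ^ 2 := by
                  rw [← sq_abs]
                  exact pow_le_pow_left₀ (abs_nonneg _) (hql l) 2
                have h2 : (ql l) ^ 2 ≤ M := le_trans h1 hMlam
                nlinarith [sq_nonneg t]
            _ = (N:ℝ) * (2 * t^2 * M) := by
                rw [Finset.sum_const, Finset.card_univ, Fintype.card_fin, nsmul_eq_mul]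
  have hfinal : Real.exp (-t * ((N:ℝ) * ν)) * Real.exp ((N:ℝ) * (2 * t^2 * M))
      = Real.exp (-((N : ℝ) * ν ^ 2) / (8 * M)) := by
    rw [← Real.exp_add]
    congr 1
    rw [htdef]
    field_simp
    ring
  -- conclude
  have hset : {ω | (∑ l, ql l * (z l ω) ^ 2) - (∑ l, ql l) ≥ (N : ℝ) * ν}
      = {ω | (N : ℝ) * ν ≤ (∑ l, X l) ω} := by
    ext ω
    simp only [Set.mem_setOf_eq, ge_iff_le, Finset.sum_apply, hXdef, Finset.sum_sub_distrib]
  rw [hset, ENNReal.le_ofReal_iff_toReal_le (measure_ne_top P _) (Real.exp_nonneg _)]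
  calc (P {ω | (N : ℝ) * ν ≤ (∑ l, X l) ω}).toReal
      ≤ Real.exp (-t * ((N:ℝ) * ν)) * mgf (∑ l, X l) P t := hchern
    _ ≤ Real.exp (-t * ((N:ℝ) * ν)) * Real.exp ((N:ℝ) * (2 * t^2 * M)) := by
        rw [hmgfsum]
        exact mul_le_mul_of_nonneg_left hprod (Real.exp_nonneg _)
    _ = Real.exp (-((N : ℝ) * ν ^ 2) / (8 * M)) := hfinal

end Main
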